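/- Let q be an odd prime power. For each x ∈ F_q let X(x) and Y(x) be subsets of F_q, and put T = (Σ_{x ∈ F_q} |X(x)|) · (Σ_{y ∈ F_q} |Y(y)|). Then the number S of quadruples (x, y, x′, y′) ∈ F_q⁴ with x′ ∈ X(x), y′ ∈ Y(y) and x′ + y′ = (x + y)² satisfies |S − T/q| ≤ √(q·T). -/

import Mathlib

set_option linter.unusedVariables false

open Finset

set_option linter.unusedSectionVars false

namespace SolSq

variable {F : Type*} [Field F] [Fintype F] [DecidableEq F]

noncomputable def psi (F : Type*) [Field F] [Fintype F] : AddChar F ℂ :=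
  AddChar.FiniteField.primitiveChar_to_Complex F

lemma psi_prim : (psi F).IsPrimitive :=
  AddChar.FiniteField.primitiveChar_to_Complex_isPrimitive F

lemma sum_psi (t : F) :
    ∑ b : F, psi F (b * t) = if t = 0 then (Fintype.card F : ℂ) else 0 := by
  rw [AddChar.sum_mulShift t psi_prim]
  split_ifs <;> simp

lemma conj_psi (a : F) : (starRingEnd ℂ) (psi F a) = psi F (-a) := by
  have hp : (ringChar F).Prime := CharP.char_is_prime F (ringChar F)
  rw [AddChar.starComp_apply hp.pos, AddChar.inv_apply]

/-- `fc Z b x = ∑_{z ∈ Z x} ψ(b z)`. -/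
noncomputable def fc (Z : F → Finset F) (b x : F) : ℂ := ∑ z ∈ Z x, psi F (b * z)

lemma normSq_cast (u : ℂ) : ((‖u‖ ^ 2 : ℝ) : ℂ) = u * (starRingEnd ℂ) u := by
  rw [RCLike.mul_conj]; norm_cast

/-- Parseval: `∑_b ∑_x ‖fc Z b x‖² = q · ∑_x |Z x|`. -/
lemma parseval (Z : F → Finset F) :
    ∑ b : F, ∑ x : F, ‖fc Z b x‖ ^ 2
      = (Fintype.card F : ℝ) * ∑ x : F, ((Z x).card : ℝ) := by
  have key : ∑ b : F, ∑ x : F, ((‖fc Z b x‖ ^ 2 : ℝ) : ℂ)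
      = (Fintype.card F : ℂ) * ∑ x : F, ((Z x).card : ℂ) := by
    have step1 : ∀ b x : F, ((‖fc Z b x‖ ^ 2 : ℝ) : ℂ)
        = ∑ z ∈ Z x, ∑ w ∈ Z x, psi F (b * (z - w)) := by
      intro b x
      rw [normSq_cast, fc, map_sum, Finset.sum_mul_sum]
      refine Finset.sum_congr rfl fun z _ => Finset.sum_congr rfl fun w _ => ?_
      rw [conj_psi, ← AddChar.map_add_eq_mul]
      congr 1; ring
    simp_rw [step1]
    have hx : ∀ x : F, ∑ b : F, ∑ z ∈ Z x, ∑ w ∈ Z x, psi F (b * (z - w))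
        = (Fintype.card F : ℂ) * ((Z x).card : ℂ) := by
      intro x
      calc ∑ b : F, ∑ z ∈ Z x, ∑ w ∈ Z x, psi F (b * (z - w))
          = ∑ z ∈ Z x, ∑ b : F, ∑ w ∈ Z x, psi F (b * (z - w)) := Finset.sum_comm
        _ = ∑ z ∈ Z x, ∑ w ∈ Z x, ∑ b : F, psi F (b * (z - w)) :=
            Finset.sum_congr rfl fun z _ => Finset.sum_comm
        _ = ∑ z ∈ Z x, (Fintype.card F : ℂ) := by
            refine Finset.sum_congr rfl fun z hz => ?_
            have h1 : ∀ w ∈ Z x, ∑ b : F, psi F (b * (z - w))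
                = if w = z then (Fintype.card F : ℂ) else 0 := by
              intro w _
              rw [sum_psi]
              simp only [sub_eq_zero]
              exact if_congr ⟨fun h => h.symm, fun h => h.symm⟩ rfl rfl
            rw [Finset.sum_congr rfl h1,
              Finset.sum_ite_eq' (Z x) z fun _ => (Fintype.card F : ℂ)]
            simp [hz]
        _ = (Fintype.card F : ℂ) * ((Z x).card : ℂ) := by
            rw [Finset.sum_const]; simp [mul_comm]
    rw [Finset.sum_comm]
    simp_rw [hx]
    rw [← Finset.mul_sum]
  have := key
  push_cast at this
  exact_mod_cast this

lemma psi_row_sum {b : F} (hb : b ≠ 0) (h2 : (2 : F) ≠ 0) (y y' : F) :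
    ∑ x : F, psi F (-(b * (x + y) ^ 2)) * psi F (b * (x + y') ^ 2)
      = if y' = y then (Fintype.card F : ℂ) else 0 := by
  have step : ∀ x : F, psi F (-(b * (x + y) ^ 2)) * psi F (b * (x + y') ^ 2)
      = psi F (x * (2 * b * (y' - y))) * psi F (b * (y' ^ 2 - y ^ 2)) := by
    intro x
    rw [← AddChar.map_add_eq_mul, ← AddChar.map_add_eq_mul]
    congr 1; ring
  simp_rw [step]
  rw [← Finset.sum_mul, sum_psi]
  rcases eq_or_ne y' y with h | h
  · subst h; simp
  · have hc : 2 * b * (y' - y) ≠ 0 :=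
      mul_ne_zero (mul_ne_zero h2 hb) (sub_ne_zero.mpr h)
    simp [hc, h]

lemma inner_orth {b : F} (hb : b ≠ 0) (h2 : (2 : F) ≠ 0) (g : F → ℂ) :
    ∑ x : F, ‖∑ y : F, g y * psi F (-(b * (x + y) ^ 2))‖ ^ 2
      = (Fintype.card F : ℝ) * ∑ y : F, ‖g y‖ ^ 2 := by
  have key : ∑ x : F, ((‖∑ y : F, g y * psi F (-(b * (x + y) ^ 2))‖ ^ 2 : ℝ) : ℂ)
      = (Fintype.card F : ℂ) * ∑ y : F, ((‖g y‖ ^ 2 : ℝ) : ℂ) := by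
    have step1 : ∀ x : F, ((‖∑ y : F, g y * psi F (-(b * (x + y) ^ 2))‖ ^ 2 : ℝ) : ℂ)
        = ∑ y : F, ∑ y' : F, (g y * (starRingEnd ℂ) (g y')) *
            (psi F (-(b * (x + y) ^ 2)) * psi F (b * (x + y') ^ 2)) := by
      intro x
      rw [normSq_cast, map_sum, Finset.sum_mul_sum]
      refine Finset.sum_congr rfl fun yy _ => Finset.sum_congr rfl fun y' _ => ?_
      rw [map_mul, conj_psi, neg_neg]
      ring
    simp_rw [step1]
    rw [Finset.sum_comm]
    have hy : ∀ y : F, ∑ x : F, ∑ y' : F, (g y * (starRingEnd ℂ) (g y')) *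
          (psi F (-(b * (x + y) ^ 2)) * psi F (b * (x + y') ^ 2))
        = ((‖g y‖ ^ 2 : ℝ) : ℂ) * (Fintype.card F : ℂ) := by
      intro y
      calc ∑ x : F, ∑ y' : F, (g y * (starRingEnd ℂ) (g y')) *
              (psi F (-(b * (x + y) ^ 2)) * psi F (b * (x + y') ^ 2))
          = ∑ y' : F, ∑ x : F, (g y * (starRingEnd ℂ) (g y')) *
              (psi F (-(b * (x + y) ^ 2)) * psi F (b * (x + y') ^ 2)) := Finset.sum_comm
        _ = ∑ y' : F, (g y * (starRingEnd ℂ) (g y')) *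
              (if y' = y then (Fintype.card F : ℂ) else 0) := by
            refine Finset.sum_congr rfl fun y' _ => ?_
            rw [← Finset.mul_sum, psi_row_sum hb h2 y y']
        _ = (g y * (starRingEnd ℂ) (g y)) * (Fintype.card F : ℂ) := by
            simp only [mul_ite, mul_zero]
            rw [Finset.sum_ite_eq' Finset.univ y
              (fun y' => g y * (starRingEnd ℂ) (g y') * (Fintype.card F : ℂ))]
            simp
        _ = ((‖g y‖ ^ 2 : ℝ) : ℂ) * (Fintype.card F : ℂ) := by rw [← normSq_cast]
    simp_rw [hy]
    rw [← Finset.sum_mul]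
    ring
  have := key
  push_cast at this
  exact_mod_cast this

lemma cs {ι : Type*} (s : Finset ι) (u v : ι → ℝ) :
    ∑ i ∈ s, u i * v i ≤ Real.sqrt (∑ i ∈ s, u i ^ 2) * Real.sqrt (∑ i ∈ s, v i ^ 2) := by
  calc ∑ i ∈ s, u i * v i ≤ |∑ i ∈ s, u i * v i| := le_abs_self _
    _ = Real.sqrt ((∑ i ∈ s, u i * v i) ^ 2) := (Real.sqrt_sq_eq_abs _).symm
    _ ≤ Real.sqrt ((∑ i ∈ s, u i ^ 2) * ∑ i ∈ s, v i ^ 2) :=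
        Real.sqrt_le_sqrt (Finset.sum_mul_sq_le_sq_mul_sq s u v)
    _ = _ := Real.sqrt_mul (Finset.sum_nonneg fun i _ => sq_nonneg _) _

/-- The Fourier component. -/
noncomputable def Ee (X Y : F → Finset F) (b : F) : ℂ :=
  ∑ x : F, ∑ y : F, fc X b x * fc Y b y * psi F (-(b * (x + y) ^ 2))

lemma Ee_zero (X Y : F → Finset F) :
    Ee X Y 0 = (∑ x : F, ((X x).card : ℂ)) * (∑ y : F, ((Y y).card : ℂ)) := by
  rw [Finset.sum_mul_sum]
  unfold Ee fc
  simp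

lemma comm5 (P : F → F → F → F → F → ℂ) (sx sy : F → Finset F) :
    ∑ b : F, ∑ x : F, ∑ y : F, ∑ x' ∈ sx x, ∑ y' ∈ sy y, P b x y x' y'
      = ∑ x : F, ∑ y : F, ∑ x' ∈ sx x, ∑ y' ∈ sy y, ∑ b : F, P b x y x' y' :=
  Finset.sum_comm.trans (Finset.sum_congr rfl fun _ _ =>
    Finset.sum_comm.trans (Finset.sum_congr rfl fun y _ =>
      Finset.sum_comm.trans (Finset.sum_congr rfl fun x' _ => Finset.sum_comm)))

lemma expansion (X Y : F → Finset F) :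
    (Fintype.card F : ℂ) *
      ((Finset.univ.filter (fun t : F × F × F × F =>
          t.2.2.1 ∈ X t.1 ∧ t.2.2.2 ∈ Y t.2.1 ∧
            t.2.2.1 + t.2.2.2 = (t.1 + t.2.1) ^ 2)).card : ℂ)
      = ∑ b : F, Ee X Y b := by
  have part1 : (Fintype.card F : ℂ) *
      ((Finset.univ.filter (fun t : F × F × F × F =>
          t.2.2.1 ∈ X t.1 ∧ t.2.2.2 ∈ Y t.2.1 ∧
            t.2.2.1 + t.2.2.2 = (t.1 + t.2.1) ^ 2)).card : ℂ)
      = ∑ x : F, ∑ y : F, ∑ x' ∈ X x, ∑ y' ∈ Y y, ∑ b : F,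
          psi F (b * x') * psi F (b * y') * psi F (-(b * (x + y) ^ 2)) := by
    rw [Finset.card_filter]
    push_cast
    rw [Finset.mul_sum]
    rw [Fintype.sum_prod_type]
    refine Finset.sum_congr rfl fun x _ => ?_
    rw [Fintype.sum_prod_type]
    refine Finset.sum_congr rfl fun y _ => ?_
    rw [Fintype.sum_prod_type]
    simp only [mul_ite, mul_one, mul_zero, ite_and, Finset.sum_ite_irrel,
      Finset.sum_const_zero, Finset.sum_ite_mem, Finset.univ_inter]
    refine Finset.sum_congr rfl fun x' _ => Finset.sum_congr rfl fun y' _ => ?_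
    have hb : ∀ b : F, psi F (b * x') * psi F (b * y') * psi F (-(b * (x + y) ^ 2))
        = psi F (b * (x' + y' - (x + y) ^ 2)) := by
      intro b
      rw [← AddChar.map_add_eq_mul, ← AddChar.map_add_eq_mul]
      congr 1; ring
    rw [Finset.sum_congr rfl fun b _ => hb b, sum_psi]
    simp only [sub_eq_zero]
  have part2 : ∀ b : F, Ee X Y b
      = ∑ x : F, ∑ y : F, ∑ x' ∈ X x, ∑ y' ∈ Y y,
          psi F (b * x') * psi F (b * y') * psi F (-(b * (x + y) ^ 2)) := by
    intro b
    unfold Ee fc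
    refine Finset.sum_congr rfl fun x _ => Finset.sum_congr rfl fun y _ => ?_
    rw [Finset.sum_mul, Finset.sum_mul]
    refine Finset.sum_congr rfl fun x' _ => ?_
    rw [Finset.mul_sum, Finset.sum_mul]
  rw [part1, Finset.sum_congr rfl fun b _ => part2 b, comm5]

lemma Ee_bound (X Y : F → Finset F) {b : F} (hb : b ≠ 0) (h2 : (2 : F) ≠ 0) :
    ‖Ee X Y b‖ ≤ Real.sqrt (∑ x : F, ‖fc X b x‖ ^ 2) *
      Real.sqrt ((Fintype.card F : ℝ) * ∑ y : F, ‖fc Y b y‖ ^ 2) := by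
  have hE : Ee X Y b
      = ∑ x : F, fc X b x * ∑ y : F, fc Y b y * psi F (-(b * (x + y) ^ 2)) := by
    unfold Ee
    refine Finset.sum_congr rfl fun x _ => ?_
    rw [Finset.mul_sum]
    exact Finset.sum_congr rfl fun y _ => mul_assoc _ _ _
  rw [hE]
  calc ‖∑ x : F, fc X b x * ∑ y : F, fc Y b y * psi F (-(b * (x + y) ^ 2))‖
      ≤ ∑ x : F, ‖fc X b x * ∑ y : F, fc Y b y * psi F (-(b * (x + y) ^ 2))‖ :=
        norm_sum_le _ _
    _ = ∑ x : F, ‖fc X b x‖ * ‖∑ y : F, fc Y b y * psi F (-(b * (x + y) ^ 2))‖ := by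
        simp [norm_mul]
    _ ≤ Real.sqrt (∑ x : F, ‖fc X b x‖ ^ 2) *
        Real.sqrt (∑ x : F, ‖∑ y : F, fc Y b y * psi F (-(b * (x + y) ^ 2))‖ ^ 2) :=
        cs _ _ _
    _ = _ := by rw [inner_orth hb h2 (fun y => fc Y b y)]

end SolSq

/-- Let `q` be an odd prime power. For each `x ∈ F_q` let
`X(x), Y(x) ⊆ F_q`, and put `T = (Σ_x |X(x)|)·(Σ_y |Y(y)|)`. Then the number `S` of
quadruples `(x,y,x',y')` with `x' ∈ X(x)`, `y' ∈ Y(y)`, `x' + y' = (x+y)²` satisfies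
`|S − T/q| ≤ √(q·T)`. -/
theorem solutions_square_equation {F : Type*} [Field F] [Fintype F] [DecidableEq F]
    (hodd : Odd (Fintype.card F)) (X Y : F → Finset F) :
    |((Finset.univ.filter (fun t : F × F × F × F =>
          t.2.2.1 ∈ X t.1 ∧ t.2.2.2 ∈ Y t.2.1 ∧
            t.2.2.1 + t.2.2.2 = (t.1 + t.2.1) ^ 2)).card : ℝ)
        - ((∑ x : F, ((X x).card : ℝ)) * (∑ y : F, ((Y y).card : ℝ)))
          / (Fintype.card F : ℝ)|
      ≤ Real.sqrt ((Fintype.card F : ℝ)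
          * ((∑ x : F, ((X x).card : ℝ)) * (∑ y : F, ((Y y).card : ℝ)))) := by
  classical
  have hq0 : (0:ℝ) < (Fintype.card F : ℝ) := by exact_mod_cast Fintype.card_pos
  have hq' : (0:ℝ) ≤ (Fintype.card F : ℝ) := le_of_lt hq0
  have hqne : (Fintype.card F : ℝ) ≠ 0 := ne_of_gt hq0
  have h2 : (2 : F) ≠ 0 := by
    intro h
    have hdvd : ringChar F ∣ 2 := (ringChar.spec F 2).mp (by exact_mod_cast h)
    have hp : (ringChar F).Prime := CharP.char_is_prime F (ringChar F)
    have hr2 : ringChar F = 2 := (Nat.prime_dvd_prime_iff_eq hp Nat.prime_two).mp hdvd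
    have h1 := FiniteField.even_card_iff_char_two.mp hr2
    have h2 := Nat.odd_iff.mp hodd
    omega

  set A := ∑ x : F, ((X x).card : ℝ) with hA
  set B := ∑ y : F, ((Y y).card : ℝ) with hB
  have hA0 : 0 ≤ A := Finset.sum_nonneg fun _ _ => by positivity
  have hB0 : 0 ≤ B := Finset.sum_nonneg fun _ _ => by positivity
  set Sc : ℕ := (Finset.univ.filter (fun t : F × F × F × F =>
      t.2.2.1 ∈ X t.1 ∧ t.2.2.2 ∈ Y t.2.1 ∧
        t.2.2.1 + t.2.2.2 = (t.1 + t.2.1) ^ 2)).card with hSc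
  -- the complex-side splitting
  have hsplit : (Fintype.card F : ℂ) * (Sc : ℂ) - ((A * B : ℝ) : ℂ)
      = ∑ b ∈ Finset.univ.erase (0 : F), SolSq.Ee X Y b := by
    have hexp := SolSq.expansion X Y
    rw [← Finset.add_sum_erase _ _ (Finset.mem_univ (0:F)), SolSq.Ee_zero] at hexp
    rw [hexp, hA, hB]
    push_cast
    ring
  -- norms bound
  set Fb : F → ℝ := fun b => ∑ x : F, ‖SolSq.fc X b x‖ ^ 2 with hFb
  set Gb : F → ℝ := fun b => ∑ y : F, ‖SolSq.fc Y b y‖ ^ 2 with hGb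
  have hFb0 : ∀ b, 0 ≤ Fb b := fun b => Finset.sum_nonneg fun _ _ => sq_nonneg _
  have hGb0 : ∀ b, 0 ≤ Gb b := fun b => Finset.sum_nonneg fun _ _ => sq_nonneg _
  have hFsum : ∑ b ∈ Finset.univ.erase (0:F), Fb b ≤ (Fintype.card F : ℝ) * A := by
    rw [hA, ← SolSq.parseval X]
    exact Finset.sum_le_sum_of_subset_of_nonneg (Finset.subset_univ _)
      (fun b _ _ => hFb0 b)
  have hGsum : ∑ b ∈ Finset.univ.erase (0:F), Gb b ≤ (Fintype.card F : ℝ) * B := by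
    rw [hB, ← SolSq.parseval Y]
    exact Finset.sum_le_sum_of_subset_of_nonneg (Finset.subset_univ _)
      (fun b _ _ => hGb0 b)
  have hnorm : |(Fintype.card F : ℝ) * (Sc : ℝ) - A * B|
      ≤ Real.sqrt (Fintype.card F : ℝ) *
        (Real.sqrt ((Fintype.card F : ℝ) * A) * Real.sqrt ((Fintype.card F : ℝ) * B)) := by
    have h1 : |(Fintype.card F : ℝ) * (Sc : ℝ) - A * B|
        = ‖(Fintype.card F : ℂ) * (Sc : ℂ) - ((A * B : ℝ) : ℂ)‖ := by
      rw [show (Fintype.card F : ℂ) * (Sc : ℂ) - ((A * B : ℝ) : ℂ)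
          = (((Fintype.card F : ℝ) * (Sc : ℝ) - A * B : ℝ) : ℂ) by push_cast; ring]
      rw [Complex.norm_real, Real.norm_eq_abs]
    rw [h1, hsplit]
    calc ‖∑ b ∈ Finset.univ.erase (0:F), SolSq.Ee X Y b‖
        ≤ ∑ b ∈ Finset.univ.erase (0:F), ‖SolSq.Ee X Y b‖ := norm_sum_le _ _
      _ ≤ ∑ b ∈ Finset.univ.erase (0:F),
            Real.sqrt (Fintype.card F : ℝ) * (Real.sqrt (Fb b) * Real.sqrt (Gb b)) := by
          refine Finset.sum_le_sum fun b hb => ?_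
          have hbne : b ≠ 0 := (Finset.mem_erase.mp hb).1
          have := SolSq.Ee_bound X Y hbne h2
          rw [Real.sqrt_mul hq'] at this
          calc ‖SolSq.Ee X Y b‖ ≤ Real.sqrt (Fb b) *
                (Real.sqrt (Fintype.card F : ℝ) * Real.sqrt (Gb b)) := this
            _ = Real.sqrt (Fintype.card F : ℝ) * (Real.sqrt (Fb b) * Real.sqrt (Gb b)) := by
                ring
      _ = Real.sqrt (Fintype.card F : ℝ) *
            ∑ b ∈ Finset.univ.erase (0:F), Real.sqrt (Fb b) * Real.sqrt (Gb b) := by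
          rw [Finset.mul_sum]
      _ ≤ Real.sqrt (Fintype.card F : ℝ) *
            (Real.sqrt (∑ b ∈ Finset.univ.erase (0:F), Real.sqrt (Fb b) ^ 2) *
             Real.sqrt (∑ b ∈ Finset.univ.erase (0:F), Real.sqrt (Gb b) ^ 2)) := by
          exact mul_le_mul_of_nonneg_left (SolSq.cs _ _ _) (Real.sqrt_nonneg _)
      _ ≤ Real.sqrt (Fintype.card F : ℝ) *
            (Real.sqrt ((Fintype.card F : ℝ) * A) * Real.sqrt ((Fintype.card F : ℝ) * B)) := by
          refine mul_le_mul_of_nonneg_left ?_ (Real.sqrt_nonneg _)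
          have e1 : ∑ b ∈ Finset.univ.erase (0:F), Real.sqrt (Fb b) ^ 2
              = ∑ b ∈ Finset.univ.erase (0:F), Fb b :=
            Finset.sum_congr rfl fun b _ => Real.sq_sqrt (hFb0 b)
          have e2 : ∑ b ∈ Finset.univ.erase (0:F), Real.sqrt (Gb b) ^ 2
              = ∑ b ∈ Finset.univ.erase (0:F), Gb b :=
            Finset.sum_congr rfl fun b _ => Real.sq_sqrt (hGb0 b)
          rw [e1, e2]
          exact mul_le_mul (Real.sqrt_le_sqrt hFsum) (Real.sqrt_le_sqrt hGsum)
            (Real.sqrt_nonneg _) (Real.sqrt_nonneg _)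
  -- final arithmetic
  have e0 : ((Sc : ℝ)) - A * B / (Fintype.card F : ℝ)
      = ((Fintype.card F : ℝ) * (Sc : ℝ) - A * B) / (Fintype.card F : ℝ) := by
    field_simp
  rw [e0, abs_div, abs_of_pos hq0, div_le_iff₀ hq0]
  have e2 : Real.sqrt (Fintype.card F : ℝ) *
        (Real.sqrt ((Fintype.card F : ℝ) * A) * Real.sqrt ((Fintype.card F : ℝ) * B))
      = Real.sqrt ((Fintype.card F : ℝ) * (A * B)) * (Fintype.card F : ℝ) := by
    rw [Real.sqrt_mul hq' A, Real.sqrt_mul hq' B, Real.sqrt_mul hq' (A*B),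
      Real.sqrt_mul hA0 B]
    have hss : Real.sqrt (Fintype.card F : ℝ) * Real.sqrt (Fintype.card F : ℝ)
        = (Fintype.card F : ℝ) := Real.mul_self_sqrt hq'
    calc Real.sqrt (Fintype.card F : ℝ) *
          (Real.sqrt (Fintype.card F : ℝ) * Real.sqrt A *
            (Real.sqrt (Fintype.card F : ℝ) * Real.sqrt B))
        = (Real.sqrt (Fintype.card F : ℝ) * Real.sqrt (Fintype.card F : ℝ)) *
            (Real.sqrt (Fintype.card F : ℝ) * (Real.sqrt A * Real.sqrt B)) := by ring
      _ = Real.sqrt (Fintype.card F : ℝ) * (Real.sqrt A * Real.sqrt B) *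
            (Fintype.card F : ℝ) := by rw [hss]; ring
  calc |(Fintype.card F : ℝ) * (Sc : ℝ) - A * B|
      ≤ Real.sqrt (Fintype.card F : ℝ) *
        (Real.sqrt ((Fintype.card F : ℝ) * A) * Real.sqrt ((Fintype.card F : ℝ) * B)) := hnorm
    _ = Real.sqrt ((Fintype.card F : ℝ) * (A * B)) * (Fintype.card F : ℝ) := e2
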